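/- Let σ², N₁, N₂ > 0 and 0 < D₂ ≤ D₁ ≤ σ². Then R̃_HB^CR(D₁, D₂) := (1/2)·log₂( σ²·(D₁+N₁+N₂)·(D₂+N₂) / ((σ²+N₁+N₂)·(D₁+N₂)·D₂) ) satisfies R̃_HB^CR(D₁, D₂) ≥ max( R_G^CR(D₁, N₁+N₂), R_G^CR(D₂, N₂) ), where R_G^CR(D, N) = (1/2)·log₂( σ²·(D+N) / ((σ²+N)·D) ). -/

import Mathlib

noncomputable def RG_CR (σ2 N D : ℝ) : ℝ :=
  (1/2) * Real.logb 2 (σ2 * (D + N) / ((σ2 + N) * D))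

noncomputable def RHB_CR (σ2 N₁ N₂ D₁ D₂ : ℝ) : ℝ :=
  (1/2) * Real.logb 2 (σ2 * (D₁ + N₁ + N₂) * (D₂ + N₂)
      / ((σ2 + N₁ + N₂) * (D₁ + N₂) * D₂))

theorem stmt_4 (σ2 N₁ N₂ D₁ D₂ : ℝ) (hσ : 0 < σ2) (hN₁ : 0 < N₁) (hN₂ : 0 < N₂)
    (hD₂ : 0 < D₂) (hD₂₁ : D₂ ≤ D₁) (hD₁σ : D₁ ≤ σ2) :
    max (RG_CR σ2 (N₁ + N₂) D₁) (RG_CR σ2 N₂ D₂) ≤ RHB_CR σ2 N₁ N₂ D₁ D₂ := by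
  have hD₁ : 0 < D₁ := lt_of_lt_of_le hD₂ hD₂₁
  unfold RG_CR RHB_CR
  apply max_le
  · apply mul_le_mul_of_nonneg_left _ (by norm_num)
    apply Real.logb_le_logb_of_le (by norm_num : (1:ℝ) < 2) (by positivity)
    rw [div_le_div_iff₀ (by positivity) (by positivity)]
    nlinarith [mul_nonneg (by positivity : (0:ℝ) ≤ σ2*(D₁+N₁+N₂)*(σ2+N₁+N₂)*N₂) (sub_nonneg.mpr hD₂₁)]
  · apply mul_le_mul_of_nonneg_left _ (by norm_num)
    apply Real.logb_le_logb_of_le (by norm_num : (1:ℝ) < 2) (by positivity)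
    rw [div_le_div_iff₀ (by positivity) (by positivity)]
    nlinarith [mul_nonneg (by positivity : (0:ℝ) ≤ σ2*(D₂+N₂)*D₂*N₁) (sub_nonneg.mpr hD₁σ)]
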